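/- For the chained Bell game with N ≥ 2 settings, no deterministic local strategy satisfies all 2N constraints: if bits α_0,…,α_{N−1}, β_0,…,β_{N−1} satisfy α_j ⊕ β_j = 0 for all j and α_{j+1} ⊕ β_j = 0 for j = 0,…,N−2, then α_0 ⊕ β_{N−1} = 0, contradicting the required α_0 ⊕ β_{N−1} = 1. Hence at most 2N−1 of the 2N constraints hold, and this bound is achieved (e.g. by the all-zeros strategy), so the classical value is ω_L = 1 − 1/(2N). -/
import Mathlib


/-- The chained-game predicate on input pairs (`N = n+2` settings):
`f(j,j) = 0`, `f(j+1,j) = 0` for `j < N−1`, and `f(0,N−1) = 1`.  The allowed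
pairs are exactly `(j,j)` and `(j+1 mod N, j)`, and on those pairs `u = 0 ∧
v = N−1` singles out the wrap-around edge. -/
def chainedF (n : ℕ) (u v : Fin (n + 2)) : Bool :=
  if u = 0 ∧ v = Fin.last (n + 1) then true else false

/-- Number of the `2N` chained constraints satisfied by the deterministic
local strategy `(α, β)`. -/
def chainedSat (n : ℕ) (α β : Fin (n + 2) → Bool) : ℕ :=
  (Finset.univ.filter fun j : Fin (n + 2) =>
    xor (α j) (β j) = chainedF n j j).card +
  (Finset.univ.filter fun j : Fin (n + 2) =>
    xor (α (j + 1)) (β j) = chainedF n (j + 1) j).card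

lemma last_ne_zero' (n : ℕ) : (Fin.last (n + 1) : Fin (n + 2)) ≠ 0 := by
  intro h
  have := congrArg Fin.val h
  simp [Fin.last] at this

lemma chainedF_diag (n : ℕ) (j : Fin (n + 2)) : chainedF n j j = false := by
  simp only [chainedF, ite_eq_right_iff, and_imp]
  intro h1 h2
  exact absurd (h1 ▸ h2) (Ne.symm (last_ne_zero' n))

lemma chainedF_succ (n : ℕ) (j : Fin (n + 2)) (h : j ≠ Fin.last (n + 1)) :
    chainedF n (j + 1) j = false := by
  simp [chainedF, h]

lemma last_add_one (n : ℕ) : (Fin.last (n + 1) : Fin (n + 2)) + 1 = 0 := by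
  apply Fin.ext
  simp [Fin.add_def, Fin.last]

lemma chainedF_wrap (n : ℕ) :
    chainedF n (Fin.last (n + 1) + 1) (Fin.last (n + 1)) = true := by
  simp [chainedF, last_add_one]

lemma chain_aux (n : ℕ) (α β : Fin (n + 2) → Bool)
    (h1 : ∀ j, α j = β j)
    (h2 : ∀ j : Fin (n + 2), j ≠ Fin.last (n + 1) → α (j + 1) = β j) :
    ∀ k : ℕ, (hk : k < n + 2) → α ⟨k, hk⟩ = α 0 := by
  intro k
  induction k with
  | zero => intro hk; rfl
  | succ k ih =>
    intro hk
    have hk' : k < n + 2 := Nat.lt_of_succ_lt hk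
    have hne : (⟨k, hk'⟩ : Fin (n + 2)) ≠ Fin.last (n + 1) := by
      intro h
      have := congrArg Fin.val h
      simp [Fin.last] at this
      omega
    have heq : (⟨k, hk'⟩ : Fin (n + 2)) + 1 = ⟨k + 1, hk⟩ := by
      apply Fin.ext
      simp [Fin.add_def, Nat.mod_eq_of_lt hk]
    calc α ⟨k + 1, hk⟩ = α (⟨k, hk'⟩ + 1) := by rw [heq]
      _ = β ⟨k, hk'⟩ := h2 _ hne
      _ = α ⟨k, hk'⟩ := (h1 _).symm
      _ = α 0 := ih hk'

lemma part1 (n : ℕ) (α β : Fin (n + 2) → Bool)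
    (h1 : ∀ j, α j = β j)
    (h2 : ∀ j : Fin (n + 2), j ≠ Fin.last (n + 1) → α (j + 1) = β j) :
    xor (α 0) (β (Fin.last (n + 1))) = false := by
  have : β (Fin.last (n + 1)) = α 0 := by
    rw [← h1]
    exact chain_aux n α β h1 h2 (n + 1) (by omega)
  rw [this, Bool.xor_self]

lemma sat_ne (n : ℕ) (α β : Fin (n + 2) → Bool) :
    chainedSat n α β ≠ 2 * (n + 2) := by
  intro h
  set s1 := Finset.univ.filter fun j : Fin (n + 2) =>
    xor (α j) (β j) = chainedF n j j with hs1
  set s2 := Finset.univ.filter fun j : Fin (n + 2) =>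
    xor (α (j + 1)) (β j) = chainedF n (j + 1) j with hs2
  have c1 : s1.card ≤ n + 2 := le_trans (Finset.card_le_univ _) (by simp)
  have c2 : s2.card ≤ n + 2 := le_trans (Finset.card_le_univ _) (by simp)
  have hsum : s1.card + s2.card = 2 * (n + 2) := h
  have e1 : s1.card = n + 2 := by omega
  have e2 : s2.card = n + 2 := by omega
  have u1 : s1 = Finset.univ := Finset.eq_univ_of_card _ (by simp [e1])
  have u2 : s2 = Finset.univ := Finset.eq_univ_of_card _ (by simp [e2])
  have p1 : ∀ j : Fin (n + 2), xor (α j) (β j) = chainedF n j j := by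
    intro j
    have : j ∈ s1 := u1 ▸ Finset.mem_univ j
    simpa [hs1] using this
  have p2 : ∀ j : Fin (n + 2), xor (α (j + 1)) (β j) = chainedF n (j + 1) j := by
    intro j
    have : j ∈ s2 := u2 ▸ Finset.mem_univ j
    simpa [hs2] using this
  have h1 : ∀ j, α j = β j := by
    intro j
    have := p1 j
    rw [chainedF_diag] at this
    exact by revert this; cases α _ <;> cases β _ <;> simp
  have h2 : ∀ j : Fin (n + 2), j ≠ Fin.last (n + 1) → α (j + 1) = β j := by
    intro j hj
    have := p2 j
    rw [chainedF_succ n j hj] at this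
    exact by revert this; cases α _ <;> cases β _ <;> simp
  have hw := p2 (Fin.last (n + 1))
  rw [chainedF_wrap, last_add_one] at hw
  have hfalse := part1 n α β h1 h2
  rw [hw] at hfalse
  simp at hfalse

lemma sat_zero (n : ℕ) :
    chainedSat n (fun _ => false) (fun _ => false) = 2 * (n + 2) - 1 := by
  unfold chainedSat
  have e1 : (Finset.univ.filter fun j : Fin (n + 2) =>
      xor false false = chainedF n j j) = Finset.univ := by
    apply Finset.eq_univ_of_forall
    intro j
    simp [chainedF_diag]
  have e2 : (Finset.univ.filter fun j : Fin (n + 2) =>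
      xor false false = chainedF n (j + 1) j) = Finset.univ \ {Fin.last (n + 1)} := by
    ext j
    simp only [Finset.mem_filter, Finset.mem_univ, true_and, Finset.mem_sdiff,
      Finset.mem_singleton]
    constructor
    · intro h hj
      subst hj
      rw [chainedF_wrap] at h
      simp at h
    · intro hj
      rw [chainedF_succ n j hj]
      simp
  rw [e1, e2]
  rw [Finset.card_sdiff_of_subset (by simp)]
  simp only [Finset.card_univ, Fintype.card_fin, Finset.card_singleton]
  omega

lemma sat_le (n : ℕ) (α β : Fin (n + 2) → Bool) :
    chainedSat n α β ≤ 2 * (n + 2) - 1 := by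
  have h := sat_ne n α β
  have le : chainedSat n α β ≤ 2 * (n + 2) := by
    unfold chainedSat
    have c1 := Finset.card_le_univ (Finset.univ.filter fun j : Fin (n + 2) =>
      xor (α j) (β j) = chainedF n j j)
    have c2 := Finset.card_le_univ (Finset.univ.filter fun j : Fin (n + 2) =>
      xor (α (j + 1)) (β j) = chainedF n (j + 1) j)
    simp only [Finset.card_univ, Fintype.card_fin] at c1 c2
    omega
  omega

/-- For the chained Bell game with `N = n+2 ≥ 2` settings, no
deterministic local strategy satisfies all `2N` constraints: if all equality
constraints hold, then `α₀ ⊕ β_{N−1} = 0`, contradicting the required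
`α₀ ⊕ β_{N−1} = 1`.  At most `2N − 1` constraints hold, the all-zeros
strategy achieves this, and the classical value is `ω_L = 1 − 1/(2N)`. -/
theorem stmt11 (n : ℕ) :
    (∀ α β : Fin (n + 2) → Bool,
      (∀ j, α j = β j) →
      (∀ j : Fin (n + 2), j ≠ Fin.last (n + 1) → α (j + 1) = β j) →
      xor (α 0) (β (Fin.last (n + 1))) = false) ∧
    (∀ α β : Fin (n + 2) → Bool, chainedSat n α β ≤ 2 * (n + 2) - 1) ∧
    IsGreatest
      {w : ℝ | ∃ α β : Fin (n + 2) → Bool,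
        w = (chainedSat n α β : ℝ) / (2 * (n + 2))}
      (1 - 1 / (2 * (n + 2))) := by
  have hD : (0 : ℝ) < 2 * (n + 2) := by positivity
  refine ⟨part1 n, sat_le n, ⟨⟨fun _ => false, fun _ => false, ?_⟩, ?_⟩⟩
  · rw [sat_zero]
    have h23 : 2 * (n + 2) - 1 = 2 * n + 3 := by omega
    rw [h23]
    push_cast
    field_simp
    ring
  · rintro w ⟨α, β, rfl⟩
    have hle : (chainedSat n α β : ℝ) ≤ 2 * n + 3 := by
      have := sat_le n α β
      have : chainedSat n α β ≤ 2 * n + 3 := by omega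
      exact_mod_cast this
    calc (chainedSat n α β : ℝ) / (2 * (n + 2)) ≤ (2 * n + 3) / (2 * (n + 2)) := by
          gcongr
      _ = 1 - 1 / (2 * (n + 2)) := by field_simp; ring
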